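/- Let f_1, ..., f_m be convex polynomials, where f_i depends only on the variables indexed by Δ_i ⊆ {1,...,n}, and suppose u minimizes f = f_1 + ... + f_m over K = {x : Ax = b, Cx ≥ d, x ≥ 0} with multipliers λ ∈ ℝ^{m₁}, μ ∈ ℝ_+^{m₂}, η ∈ ℝ_+^n satisfying the KKT conditions: ∇f(u) = Aᵀλ + Cᵀμ + η, μᵀ(Cu−d) = 0, ηᵀu = 0, Cu ≥ d, u ≥ 0, Au = b. Write η = η_1 + ... + η_m with each η_i ∈ ℝ_+^n supported on Δ_i, and define p_i(x) := −(x−u)ᵀ(∇f_i(u) − η_i) − f_i(u). Then: (a) p_1 + ... + p_m + λᵀ(Ax−b) + μᵀ(Cx−d) + f(u) = 0 identically, and (b) f_i(x) + p_i(x) ≥ 0 for all x ≥ 0. -/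

import Mathlib

open MvPolynomial Matrix

/-- Theorem 4.1: for convex polynomials `fᵢ` (supported on the blocks `Δᵢ`)
and a KKT point `u` of the linearly constrained problem with multipliers
`(λ, μ, η)`, `η = η₁ + ⋯ + η_m` with `ηᵢ ≥ 0` supported on `Δᵢ`, the
polynomials `pᵢ(x) = −(x−u)ᵀ(∇fᵢ(u) − ηᵢ) − fᵢ(u)` satisfy
(a) `p₁+⋯+p_m + λᵀ(Ax−b) + μᵀ(Cx−d) + f(u) = 0` identically, and
(b) `fᵢ(x) + pᵢ(x) ≥ 0` for all `x ≥ 0`. -/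

lemma hasDerivAt_eval_line {n : ℕ} (u v : Fin n → ℝ) (p : MvPolynomial (Fin n) ℝ) (t : ℝ) :
    HasDerivAt (fun s : ℝ => eval (fun j => u j + s * v j) p)
      (∑ j, v j * eval (fun j => u j + t * v j) (pderiv j p)) t := by
  induction p using MvPolynomial.induction_on with
  | C a => simpa using hasDerivAt_const t (a : ℝ)
  | add p q hp hq =>
      have := hp.add hq
      simp only [map_add]
      refine this.congr_deriv ?_
      simp [Finset.sum_add_distrib, mul_add]
  | mul_X p j hp =>
      set y : Fin n → ℝ := fun j => u j + t * v j with hy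
      have hx : HasDerivAt (fun s : ℝ => u j + s * v j) (v j) t := by
        simpa [mul_comm] using ((hasDerivAt_id t).const_mul (v j)).const_add (u j)
      have h2 := hp.mul hx
      simp only [eval_mul, eval_X]
      refine h2.congr_deriv ?_
      have key : ∀ k : Fin n, v k * eval y (pderiv k (p * X j)) =
          v k * eval y (pderiv k p) * y j + (if k = j then eval y p * v j else 0) := by
        intro k
        simp only [pderiv_mul, pderiv_X, eval_add, eval_mul, eval_X, Pi.single_apply]
        by_cases h : j = k
        · subst h; simp; ring
        · simp [h, Ne.symm h]; ring
      rw [Finset.sum_congr rfl (fun k _ => key k), Finset.sum_add_distrib,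
        Finset.sum_ite_eq' Finset.univ j]
      simp [Finset.sum_mul]
      rfl

lemma grad_ineq {n : ℕ} (p : MvPolynomial (Fin n) ℝ)
    (hconv : ConvexOn ℝ Set.univ (fun x : Fin n → ℝ => eval x p)) (u x : Fin n → ℝ) :
    eval u p + ∑ j, (x j - u j) * eval u (pderiv j p) ≤ eval x p := by
  set v : Fin n → ℝ := fun j => x j - u j with hv
  set g : ℝ → ℝ := fun s => eval (fun j => u j + s * v j) p with hg
  have hconvg : ConvexOn ℝ Set.univ g := by
    have h := hconv.comp_affineMap (AffineMap.lineMap u x)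
    have he : g = (fun y : Fin n → ℝ => eval y p) ∘ (AffineMap.lineMap u x) := by
      funext s
      simp only [hg, Function.comp_apply, AffineMap.lineMap_apply_module]
      have hvec : (fun j => u j + s * v j) = (1 - s) • u + s • x := by
        funext j
        simp [hv]; ring
      rw [hvec]
    rw [he]
    simpa using h
  have hd : HasDerivAt g (∑ j, v j * eval u (pderiv j p)) 0 := by
    have := hasDerivAt_eval_line u v p 0
    simpa using this
  have hs := hconvg.le_slope_of_hasDerivAt (Set.mem_univ 0) (Set.mem_univ 1) one_pos hd
  have hg0 : g 0 = eval u p := by simp [hg]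
  have hg1 : g 1 = eval x p := by simp [hg, hv]
  rw [slope_def_field, hg0, hg1] at hs
  have h2 : ∑ j, v j * eval u (pderiv j p) ≤ eval x p - eval u p := by
    simpa using hs
  calc eval u p + ∑ j, (x j - u j) * eval u (pderiv j p)
      = eval u p + ∑ j, v j * eval u (pderiv j p) := by rfl
    _ ≤ eval u p + (eval x p - eval u p) := by linarith
    _ = eval x p := by ring

theorem stmt10 (n m m1 m2 : ℕ) (Δ : Fin m → Finset (Fin n))
    (hcover : (⋃ i, (Δ i : Set (Fin n))) = Set.univ)
    (A : Matrix (Fin m1) (Fin n) ℝ) (b : Fin m1 → ℝ)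
    (C : Matrix (Fin m2) (Fin n) ℝ) (d : Fin m2 → ℝ)
    (f : Fin m → MvPolynomial (Fin n) ℝ)
    (hfsupp : ∀ i, f i ∈ MvPolynomial.supported ℝ (Δ i : Set (Fin n)))
    (hfconv : ∀ i, ConvexOn ℝ Set.univ (fun x : Fin n → ℝ => eval x (f i)))
    (u : Fin n → ℝ) (lam : Fin m1 → ℝ) (mu : Fin m2 → ℝ) (η : Fin n → ℝ)
    (hmu : ∀ j, 0 ≤ mu j) (hη : ∀ j, 0 ≤ η j)
    (huK : A.mulVec u = b ∧ (∀ j, d j ≤ C.mulVec u j) ∧ (∀ j, 0 ≤ u j))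
    (hmin : ∀ x : Fin n → ℝ,
      A.mulVec x = b → (∀ j, d j ≤ C.mulVec x j) → (∀ j, 0 ≤ x j) →
      eval u (∑ i, f i) ≤ eval x (∑ i, f i))
    (hKKTgrad : ∀ j, eval u (pderiv j (∑ i, f i)) =
      Aᵀ.mulVec lam j + Cᵀ.mulVec mu j + η j)
    (hcompμ : mu ⬝ᵥ (C.mulVec u - d) = 0)
    (hcompη : η ⬝ᵥ u = 0)
    (ηb : Fin m → Fin n → ℝ)
    (hηb : ∀ i j, 0 ≤ ηb i j)
    (hηbsupp : ∀ i, ∀ j ∉ Δ i, ηb i j = 0)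
    (hηsum : ∀ j, η j = ∑ i, ηb i j)
    (pp : Fin m → ((Fin n → ℝ) → ℝ))
    (hpp : ∀ i x, pp i x =
      -(∑ j, (x j - u j) * (eval u (pderiv j (f i)) - ηb i j)) - eval u (f i)) :
    (∀ x : Fin n → ℝ,
      (∑ i, pp i x) + lam ⬝ᵥ (A.mulVec x - b) + mu ⬝ᵥ (C.mulVec x - d)
        + eval u (∑ i, f i) = 0) ∧
    (∀ i, ∀ x : Fin n → ℝ, (∀ j, 0 ≤ x j) → 0 ≤ eval x (f i) + pp i x) := by
  obtain ⟨hAu, hCu, hu⟩ := huK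
  constructor
  · intro x
    have hpder : ∀ j, eval u (pderiv j (∑ i, f i)) = ∑ i, eval u (pderiv j (f i)) := by
      intro j; simp [map_sum]
    have h1 : ∑ i, pp i x =
        -(∑ j, (x j - u j) * (eval u (pderiv j (∑ i, f i)) - η j)) - eval u (∑ i, f i) := by
      simp only [hpp]
      rw [Finset.sum_sub_distrib, ← Finset.sum_neg_distrib]
      congr 1
      · rw [Finset.sum_neg_distrib, Finset.sum_neg_distrib]
        congr 1
        rw [Finset.sum_comm]
        refine Finset.sum_congr rfl fun j _ => ?_
        rw [hpder j, hηsum j, ← Finset.mul_sum, Finset.sum_sub_distrib]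
      · simp [map_sum]
    have hA : lam ⬝ᵥ (A.mulVec x - b) = ∑ j, (x j - u j) * (Aᵀ.mulVec lam j) := by
      rw [← hAu, ← Matrix.mulVec_sub, Matrix.dotProduct_mulVec, ← Matrix.mulVec_transpose,
        ← dotProduct_comm]
      simp [dotProduct]
    have hC : mu ⬝ᵥ (C.mulVec x - d) = ∑ j, (x j - u j) * (Cᵀ.mulVec mu j) := by
      have hsplit : C.mulVec x - d = C.mulVec (x - u) + (C.mulVec u - d) := by
        rw [Matrix.mulVec_sub]; abel
      rw [hsplit, dotProduct_add, hcompμ, add_zero, Matrix.dotProduct_mulVec,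
        ← Matrix.mulVec_transpose, ← dotProduct_comm]
      simp [dotProduct]
    rw [h1, hA, hC]
    have hkey : ∑ j, (x j - u j) * (eval u (pderiv j (∑ i, f i)) - η j)
        = ∑ j, (x j - u j) * (Aᵀ.mulVec lam j) + ∑ j, (x j - u j) * (Cᵀ.mulVec mu j) := by
      rw [← Finset.sum_add_distrib]
      refine Finset.sum_congr rfl fun j _ => ?_
      rw [hKKTgrad j]; ring
    rw [hkey]; ring
  · intro i x hx
    have hgi := grad_ineq (f i) (hfconv i) u x
    rw [hpp]
    have hηu : ∀ j, η j * u j = 0 := by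
      have hsum : ∑ j, η j * u j = 0 := by simpa [dotProduct] using hcompη
      intro j
      exact (Finset.sum_eq_zero_iff_of_nonneg
        (fun k _ => mul_nonneg (hη k) (hu k))).mp hsum j (Finset.mem_univ j)
    have hηbu : ∀ j, u j * ηb i j = 0 := by
      intro j
      have h1 : ηb i j ≤ η j := by
        rw [hηsum j]
        exact Finset.single_le_sum (fun k _ => hηb k j) (Finset.mem_univ i)
      have h2 := mul_le_mul_of_nonneg_right h1 (hu j)
      have h3 : 0 ≤ ηb i j * u j := mul_nonneg (hηb i j) (hu j)
      have h4 := hηu j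
      nlinarith
    have hsum2 : ∑ j, (x j - u j) * ηb i j = ∑ j, x j * ηb i j := by
      refine Finset.sum_congr rfl fun j _ => ?_
      rw [sub_mul, hηbu j, sub_zero]
    have hnn : 0 ≤ ∑ j, x j * ηb i j :=
      Finset.sum_nonneg fun j _ => mul_nonneg (hx j) (hηb i j)
    have hexp : ∑ j, (x j - u j) * (eval u (pderiv j (f i)) - ηb i j)
        = ∑ j, (x j - u j) * eval u (pderiv j (f i)) - ∑ j, (x j - u j) * ηb i j := by
      rw [← Finset.sum_sub_distrib]
      exact Finset.sum_congr rfl fun j _ => by ring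
    rw [hexp, hsum2]
    linarith
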